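/- Let S_1, ..., S_r be profinite groups, each perfect, with r > 1. If H is a closed subgroup of S_1 × ... × S_r such that the projection H → S_i × S_j is surjective for all i < j, then H = S_1 × ... × S_r. -/

import Mathlib

universe u
open scoped commutatorElement
/-- Purely algebraic Goursat–Ribet lemma, by strong induction on the number of factors. -/
theorem aux13 (n : ℕ) : ∀ (ι : Type) [Fintype ι] [DecidableEq ι], Fintype.card ι = n →
    2 ≤ n → ∀ (S : ι → Type u) (_ : ∀ i, Group (S i)),
    (∀ i, commutator (S i) = ⊤) → ∀ (H : Subgroup (∀ i, S i)),
    (∀ i j : ι, i ≠ j → ∀ (x : S i) (y : S j), ∃ h ∈ H, h i = x ∧ h j = y) →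
    H = ⊤ := by
  induction n using Nat.strong_induction_on with
  | _ n IH =>
    intro ι _ _ hcard hn S _ hperf H hsurj
    rcases eq_or_lt_of_le hn with h2 | h3
    · -- card = 2 : pair surjectivity is everything
      have h2' : Nat.card ι = 2 := by rw [Nat.card_eq_fintype_card, hcard, ← h2]
      obtain ⟨a, b, hab, huniv⟩ := Nat.card_eq_two_iff.mp h2'
      rw [eq_top_iff]
      intro x _
      obtain ⟨h, hH, ha, hb⟩ := hsurj a b hab (x a) (x b)
      have hx : h = x := by
        funext i
        have hi : i ∈ ({a, b} : Set ι) := by rw [huniv]; trivial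
        rcases hi with hi | hi
        · subst hi; exact ha
        · rw [Set.mem_singleton_iff] at hi; subst hi; exact hb
      rwa [← hx]
    · -- card ≥ 3
      have key : ∀ (ℓ : ι) (s : S ℓ), Pi.mulSingle ℓ s ∈ H := by
        intro ℓ
        obtain ⟨i₀, hne⟩ : ∃ i₀, i₀ ≠ ℓ := by
          by_contra hc
          push_neg at hc
          have : Fintype.card ι ≤ 1 :=
            Fintype.card_le_one_iff.mpr fun a b => (hc a).trans (hc b).symm
          omega
        have hcard' : Fintype.card {i : ι // i ≠ i₀} = n - 1 := by
          have := Fintype.card_subtype_compl (fun i : ι => i = i₀)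
          rw [Fintype.card_subtype_eq, hcard] at this
          convert this using 2
        let p : (∀ i, S i) →* (∀ j : {i : ι // i ≠ i₀}, S j.1) :=
          { toFun := fun x j => x j.1
            map_one' := rfl
            map_mul' := fun _ _ => rfl }
        have hHp : H.map p = ⊤ := by
          refine IH (n-1) (by omega) _ hcard' (by omega) (fun j => S j.1)
            (fun j => inferInstance) (fun j => hperf j.1) (H.map p) ?_
          intro i j hij x y
          obtain ⟨h, hH, hx, hy⟩ := hsurj i.1 j.1 (fun he => hij (Subtype.ext he)) x y
          exact ⟨p h, Subgroup.mem_map_of_mem p hH, hx, hy⟩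
        have hcomm : ∀ u v : S ℓ, Pi.mulSingle ℓ ⁅u, v⁆ ∈ H := by
          intro u v
          obtain ⟨h, hH, hh0, hhℓ⟩ := hsurj i₀ ℓ hne 1 u
          have hmem : p (Function.update h ℓ v) ∈ H.map p := by rw [hHp]; trivial
          rw [Subgroup.mem_map] at hmem
          obtain ⟨g, hgH, hg⟩ := hmem
          have hgeq : ∀ j : ι, (hj : j ≠ i₀) → g j = Function.update h ℓ v j := by
            intro j hj
            exact congrFun hg (⟨j, hj⟩ : {i : ι // i ≠ i₀})
          have hc : ⁅h, g⁆ = Pi.mulSingle ℓ ⁅u, v⁆ := by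
            funext i
            have hci : ⁅h, g⁆ i = ⁅h i, g i⁆ := rfl
            rcases eq_or_ne i ℓ with hiℓ | hiℓ
            · subst hiℓ
              have hgv : g i = v := by
                rw [hgeq i (Ne.symm hne), Function.update_self]
              rw [hci, hgv, hhℓ, Pi.mulSingle_eq_same]
            · rw [hci, Pi.mulSingle_eq_of_ne hiℓ]
              rcases eq_or_ne i i₀ with hii | hii
              · subst hii; rw [hh0]; simp [commutatorElement_def]
              · have hgh : g i = h i := by
                  rw [hgeq i hii, Function.update_of_ne hiℓ]
                rw [hgh]; simp [commutatorElement_def]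
          rw [← hc, commutatorElement_def]
          exact H.mul_mem (H.mul_mem (H.mul_mem hH hgH) (H.inv_mem hH)) (H.inv_mem hgH)
        intro s
        have hK : commutator (S ℓ) ≤ H.comap (MonoidHom.mulSingle S ℓ) := by
          rw [commutator, Subgroup.commutator_le]
          intro g₁ _ g₂ _
          exact hcomm g₁ g₂
        rw [hperf ℓ] at hK
        exact hK (Subgroup.mem_top s)
      rw [eq_top_iff]
      intro x _
      exact Subgroup.pi_mem_of_mulSingle_mem x fun i => key i (x i)

/-- Goursat-type lemma: a closed subgroup of a finite product of perfect profinite groups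
surjecting onto each pair of factors is the whole product. -/
theorem stmt13 (r : ℕ) (hr : 1 < r) (S : Fin r → Type*)
    [∀ i, Group (S i)] [∀ i, TopologicalSpace (S i)] [∀ i, IsTopologicalGroup (S i)]
    [∀ i, CompactSpace (S i)] [∀ i, TotallyDisconnectedSpace (S i)] [∀ i, T2Space (S i)]
    (hperf : ∀ i, commutator (S i) = ⊤)
    (H : Subgroup (∀ i, S i)) (hclosed : IsClosed (H : Set (∀ i, S i)))
    (hsurj : ∀ i j : Fin r, i < j → ∀ (x : S i) (y : S j), ∃ h ∈ H, h i = x ∧ h j = y) :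
    H = ⊤ := by
  refine aux13 r (Fin r) (by simp) (by omega) S (fun i => inferInstance) hperf H ?_
  intro i j hij x y
  rcases lt_or_gt_of_ne hij with hlt | hgt
  · exact hsurj i j hlt x y
  · obtain ⟨h, hH, hy, hx⟩ := hsurj j i hgt y x
    exact ⟨h, hH, hx, hy⟩
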